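/- (Characterization of the strong core via peak sets, necessity direction.) Let H be a housing market with strict partial order preferences and X an allocation in the strong core of H. Let S be a peak set of X (an absorbing set of the digraph with arcs {(a,b) : b ⪰_a X(a)}). Then X₁ = X ∩ (S × S) is an allocation of H|_S consisting only of undominated arcs, X₂ = X ∖ X₁ is an allocation in the strong core of H|_{N∖S}, and every arc of D^H leaving S is dominated by an arc of X₁. -/

import Mathlib

/-- A housing market: each agent `a` has a strict partial order `pref a`
(`pref a b c` means agent `a` strictly prefers house `b` to house `c`). -/
structure Market (N : Type) where
  pref : N → N → N → Prop
  irrefl : ∀ a b, ¬ pref a b b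
  asymm : ∀ a b c, pref a b c → ¬ pref a c b
  trans : ∀ a b c d, pref a b c → pref a c d → pref a b d

namespace Market

variable {N : Type}

/-- `b` is acceptable to `a`: `b ⪰_a a`, i.e. not `a ≻_a b`. -/
def acceptable (H : Market N) (a b : N) : Prop := ¬ H.pref a a b

/-- Arcs of the underlying digraph `D^H`. -/
def E (H : Market N) : Set (N × N) := {e | H.acceptable e.1 e.2}

/-- Undominated arcs of `D^H`. -/
def undominated (H : Market N) : Set (N × N) :=
  {e | e ∈ H.E ∧ ∀ b', H.acceptable e.1 b' → ¬ H.pref e.1 b' e.2}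

/-- A full allocation, given as a function assigning each agent its house. -/
def IsAllocation (H : Market N) (X : N → N) : Prop :=
  Function.Bijective X ∧ ∀ a, H.acceptable a (X a)

/-- A cycle of length `k ≥ 1` with all arcs in the arc set `A`. -/
def IsCycleIn (A : Set (N × N)) (k : ℕ) (c : ZMod k → N) : Prop :=
  0 < k ∧ Function.Injective c ∧ ∀ i, (c i, c (i + 1)) ∈ A

/-- `E_{[⪰X]}`: arcs `(a,b)` with `b ⪰_a X(a)`. -/
def weakImprove (H : Market N) (X : N → N) : Set (N × N) :=
  {e | e ∈ H.E ∧ ¬ H.pref e.1 (X e.1) e.2}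

/-- `E_{[≻X]}`: arcs `(a,b)` with `b ≻_a X(a)`. -/
def strictImprove (H : Market N) (X : N → N) : Set (N × N) :=
  {e | e ∈ H.E ∧ H.pref e.1 e.2 (X e.1)}

/-- A (weakly) blocking cycle for `X`. -/
def Blocks (H : Market N) (X : N → N) (k : ℕ) (c : ZMod k → N) : Prop :=
  IsCycleIn H.E k c ∧
  (∀ i, ¬ H.pref (c i) (X (c i)) (c (i + 1))) ∧
  (∃ i, H.pref (c i) (c (i + 1)) (X (c i)))

/-- The strong core: allocations admitting no blocking cycle. -/
def InStrongCore (H : Market N) (X : N → N) : Prop :=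
  H.IsAllocation X ∧ ¬ ∃ k c, H.Blocks X k c

/-- A strictly blocking cycle for `X`. -/
def StrictBlocks (H : Market N) (X : N → N) (k : ℕ) (c : ZMod k → N) : Prop :=
  IsCycleIn H.E k c ∧ ∀ i, H.pref (c i) (c (i + 1)) (X (c i))

/-- The core: allocations admitting no strictly blocking cycle. -/
def InCore (H : Market N) (X : N → N) : Prop :=
  H.IsAllocation X ∧ ¬ ∃ k c, H.StrictBlocks X k c

/-- An allocation of the submarket `H|_S`, given as a set of arcs among agents of `S`. -/
def IsAllocationOn (H : Market N) (S : Set N) (X : Set (N × N)) : Prop :=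
  X ⊆ H.E ∧ (∀ e ∈ X, e.1 ∈ S ∧ e.2 ∈ S) ∧
  (∀ a ∈ S, ∃! b, (a, b) ∈ X) ∧ (∀ b ∈ S, ∃! a, (a, b) ∈ X)

/-- A blocking cycle for the arc set `X` within the submarket `H|_S`. -/
def BlocksOn (H : Market N) (S : Set N) (X : Set (N × N)) (k : ℕ) (c : ZMod k → N) : Prop :=
  IsCycleIn H.E k c ∧ (∀ i, c i ∈ S) ∧
  (∀ i b, (c i, b) ∈ X → ¬ H.pref (c i) b (c (i + 1))) ∧
  (∃ i b, (c i, b) ∈ X ∧ H.pref (c i) (c (i + 1)) b)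

/-- Membership in the strong core of the submarket `H|_S`. -/
def InStrongCoreOn (H : Market N) (S : Set N) (X : Set (N × N)) : Prop :=
  H.IsAllocationOn S X ∧ ¬ ∃ k c, H.BlocksOn S X k c

end Market

/-- The arcs of the allocation `X` whose tails lie in `S`. -/
def graphRestrict {N : Type} (X : N → N) (S : Set N) : Set (N × N) :=
  {e | e.1 ∈ S ∧ e.2 = X e.1}

/-- Reachability in the digraph given by arc set `A`. -/
def reach {N : Type} (A : Set (N × N)) : N → N → Prop :=
  Relation.ReflTransGen (fun u v => (u, v) ∈ A)

/-- A strongly connected component of the digraph given by arc set `A`. -/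
def IsSCC {N : Type} (A : Set (N × N)) (S : Set N) : Prop :=
  S.Nonempty ∧ (∀ u ∈ S, ∀ v ∈ S, reach A u v) ∧
  (∀ u ∈ S, ∀ v, reach A u v → reach A v u → v ∈ S)

/-- An absorbing set: a strongly connected component not left by any arc. -/
def IsAbsorbing {N : Type} (A : Set (N × N)) (S : Set N) : Prop :=
  IsSCC A S ∧ ∀ e ∈ A, e.1 ∈ S → e.2 ∈ S

lemma idx_congr {α : Type*} (l : List α) {a b : ℕ} (h : a = b) {ha : a < l.length} :
    l[a] = l[b]'(h ▸ ha) := by subst h; rfl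

lemma exists_nodup_path {N : Type} (A : Set (N × N)) {u v : N}
    (h : reach A u v) :
    ∃ l : List N, l.Chain' (fun x y => (x, y) ∈ A) ∧ l.Nodup ∧
      l.head? = some u ∧ l.getLast? = some v := by
  induction h using Relation.ReflTransGen.head_induction_on with
  | refl => exact ⟨[v], List.isChain_singleton v, by simp, rfl, rfl⟩
  | head h' h ih =>
    rename_i a c
    obtain ⟨l, hc, hn, hh, hl⟩ := ih
    by_cases hm : a ∈ l
    · obtain ⟨l₁, l₂, rfl⟩ := List.append_of_mem hm
      refine ⟨a :: l₂, hc.suffix ⟨l₁, rfl⟩,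
        hn.sublist (List.IsSuffix.sublist ⟨l₁, rfl⟩), rfl, ?_⟩
      rw [List.getLast?_append, List.getLast?_eq_getLast (l := a :: l₂) (by simp)] at hl
      rw [List.getLast?_eq_getLast (l := a :: l₂) (by simp)]
      simpa using hl
    · refine ⟨a :: l, List.isChain_cons.mpr ⟨?_, hc⟩,
        List.nodup_cons.mpr ⟨hm, hn⟩, rfl, ?_⟩
      · intro y hy; rw [hh] at hy; simp at hy; subst hy; exact h'
      · cases l with
        | nil => simp at hh
        | cons x l' => rw [List.getLast?_cons_cons]; exact hl

lemma exists_cycle' {N : Type} (A : Set (N × N)) {u v : N} (hne : v ≠ u)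
    (h : reach A u v) :
    ∃ (k : ℕ) (c : ZMod k → N), 0 < k ∧ Function.Injective c ∧
      c 0 = v ∧ c 1 = u ∧ ∀ i : ZMod k, i ≠ 0 → (c i, c (i + 1)) ∈ A := by
  obtain ⟨l, hc, hn, hh, hl⟩ := exists_nodup_path A h
  have hlne : l ≠ [] := by rintro rfl; simp at hh
  have hhd : l.head hlne = u := by rw [List.head?_eq_head hlne] at hh; exact Option.some_injective _ hh
  have hlst : l.getLast hlne = v := by
    rw [List.getLast?_eq_getLast (l := l) hlne] at hl; exact Option.some_injective _ hl
  set n := l.length with hnlen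
  have hn1 : 1 ≤ n := List.length_pos_iff.mpr hlne
  have hn2 : 2 ≤ n := by
    match l, hlne, hhd, hlst with
    | [x], _, hhd, hlst =>
      simp only [List.head_cons, List.getLast_singleton] at hhd hlst
      exact absurd (hlst.symm.trans hhd) hne
    | x :: y :: l', _, _, _ => simp [hnlen]
  haveI : NeZero n := ⟨by omega⟩
  haveI : Fact (1 < n) := ⟨by omega⟩
  set m : List N := v :: l.dropLast with hm
  have hmlen : m.length = n := by simp [hm, hnlen]; omega
  have hvnot : v ∉ l.dropLast := by
    intro hv
    have := List.dropLast_append_getLast hlne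
    have hnd : (l.dropLast ++ [l.getLast hlne]).Nodup := by rw [this]; exact hn
    rw [List.nodup_append] at hnd
    exact hnd.2.2 v hv (l.getLast hlne) (by simp) hlst.symm
  have hmnd : m.Nodup := List.nodup_cons.mpr ⟨hvnot, hn.sublist (List.dropLast_sublist l)⟩
  have hvlt : ∀ i : ZMod n, i.val < m.length := fun i =>
    lt_of_lt_of_le (ZMod.val_lt i) (le_of_eq hmlen.symm)
  refine ⟨n, fun i => m.get ⟨i.val, hvlt i⟩, by omega, ?_, ?_, ?_, ?_⟩
  · intro i j hij
    exact ZMod.val_injective n (Fin.mk.injEq _ _ _ _ ▸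
      (List.nodup_iff_injective_get.mp hmnd hij))
  · show m.get ⟨(0 : ZMod n).val, hvlt 0⟩ = v
    simp [ZMod.val_zero, hm]
  · show m.get ⟨(1 : ZMod n).val, hvlt 1⟩ = u
    have h1 : (1 : ZMod n).val = 1 := ZMod.val_one n
    have : m.get ⟨(1 : ZMod n).val, hvlt 1⟩ = m.get ⟨1, by rw [hmlen]; omega⟩ := by
      simp [h1]
    rw [this]
    show (l.dropLast).get ⟨0, by rw [List.length_dropLast]; omega⟩ = u
    simp only [List.get_eq_getElem, List.getElem_dropLast]
    rw [List.getElem_zero, hhd]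
  · intro i hi
    have hj1 : 1 ≤ i.val :=
      Nat.one_le_iff_ne_zero.mpr (fun h0 => hi ((ZMod.val_eq_zero i).mp h0))
    have hjlt : i.val < n := ZMod.val_lt i
    have hchain := List.isChain_iff_getElem.mp hc
    simp only [List.get_eq_getElem] at hchain ⊢
    have hmget : ∀ (s : ℕ) (h1 : 1 ≤ s) (h2 : s < n) (hs : s < m.length),
        m[s] = l[s-1]'(by omega) := by
      intro s h1 h2 hs
      obtain ⟨t, rfl⟩ : ∃ t, s = t + 1 := ⟨s - 1, by omega⟩
      show (v :: l.dropLast)[t+1]'(by simpa [hm] using hs) = _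
      rw [List.getElem_cons_succ, List.getElem_dropLast]
      exact idx_congr l (by omega)
    have key : ∀ (s t : ℕ) (hs : s < m.length) (ht : t < m.length),
        1 ≤ s → (t = s + 1 ∨ (s = n - 1 ∧ t = 0)) → (m[s], m[t]) ∈ A := by
      intro s t hs ht h1 hcase
      have hsn : s < n := by omega
      rcases hcase with rfl | ⟨hs', rfl⟩
      · rw [hmget s h1 hsn hs, hmget (s+1) (by omega) (by omega) ht]
        have hch := hchain (s - 1) (by omega)
        convert hch using 2
        all_goals exact idx_congr l (by omega)
      · have hm0 : m[(0:ℕ)]'ht = l[n-1]'(by omega) := by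
          show (v :: l.dropLast)[0] = _
          rw [List.getElem_cons_zero, ← hlst, List.getLast_eq_getElem]
        rw [hmget s h1 hsn hs, hm0]
        have hch := hchain (n - 2) (by omega)
        convert hch using 2
        all_goals exact idx_congr l (by omega)
    refine key i.val (i+1).val (hvlt i) (hvlt (i+1)) hj1 ?_
    have hv2 : (i+1).val = (i.val + 1) % n := by rw [ZMod.val_add, ZMod.val_one]
    rcases Nat.lt_or_ge (i.val + 1) n with hlt | hge
    · left; rw [hv2, Nat.mod_eq_of_lt hlt]
    · right
      constructor
      · omega
      · rw [hv2]
        have : i.val + 1 = n := by omega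
        rw [this, Nat.mod_self]

theorem stmt3 {N : Type} [Fintype N] (H : Market N) (X : N → N)
    (hX : H.InStrongCore X) (S : Set N)
    (hS : IsAbsorbing (H.weakImprove X) S) :
    (H.IsAllocationOn S (graphRestrict X S) ∧ graphRestrict X S ⊆ H.undominated) ∧
    H.InStrongCoreOn Sᶜ (graphRestrict X Sᶜ) ∧
    (∀ a ∈ S, ∀ b, b ∉ S → (a, b) ∈ H.E →
      ∃ e ∈ graphRestrict X S, e.1 = a ∧ H.pref a e.2 b) := by
  obtain ⟨⟨hbij, hacc⟩, hnoblock⟩ := hX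
  have hXarc : ∀ a, (a, X a) ∈ H.weakImprove X := fun a => ⟨hacc a, H.irrefl a (X a)⟩
  have hmapS : ∀ a ∈ S, X a ∈ S := fun a ha => hS.2 (a, X a) (hXarc a) ha
  have hSfin : S.Finite := Set.toFinite S
  have hinjS : Set.InjOn X S := fun x _ y _ h => hbij.1 h
  have hbijS : Set.BijOn X S S :=
    (hSfin.injOn_iff_bijOn_of_mapsTo hmapS).mp hinjS
  have hsurjS : ∀ b ∈ S, ∃ a ∈ S, X a = b := fun b hb => hbijS.2.2 hb
  have hmapSc : ∀ a ∈ Sᶜ, X a ∈ Sᶜ := by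
    intro a ha hXa
    obtain ⟨a', ha', he⟩ := hsurjS (X a) hXa
    exact ha (hbij.1 he ▸ ha')
  have hsurjSc : ∀ b ∈ Sᶜ, ∃ a ∈ Sᶜ, X a = b := by
    intro b hb
    obtain ⟨a, rfl⟩ := hbij.2 b
    exact ⟨a, fun haS => hb (hmapS a haS), rfl⟩
  have allocOn : ∀ T : Set N, (∀ a ∈ T, X a ∈ T) → (∀ b ∈ T, ∃ a ∈ T, X a = b) →
      H.IsAllocationOn T (graphRestrict X T) := by
    intro T hmap hsurj
    refine ⟨?_, ?_, ?_, ?_⟩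
    · rintro ⟨a, b⟩ ⟨haT, (rfl : b = X a)⟩
      exact hacc a
    · rintro ⟨a, b⟩ ⟨haT, (rfl : b = X a)⟩
      exact ⟨haT, hmap a haT⟩
    · intro a haT
      exact ⟨X a, ⟨haT, rfl⟩, fun b hb => hb.2⟩
    · intro b hbT
      obtain ⟨a, haT, rfl⟩ := hsurj b hbT
      exact ⟨a, ⟨haT, rfl⟩, fun a' ha' => hbij.1 ha'.2.symm⟩
  refine ⟨⟨allocOn S hmapS hsurjS, ?_⟩, ⟨allocOn Sᶜ hmapSc hsurjSc, ?_⟩, ?_⟩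
  · -- undominated
    rintro ⟨a, b⟩ ⟨haS, (rfl : b = X a)⟩
    refine ⟨hacc a, ?_⟩
    intro b' hb' hpref
    have harc : (a, b') ∈ H.weakImprove X := ⟨hb', H.asymm a b' (X a) hpref⟩
    have hbS : b' ∈ S := hS.2 (a, b') harc haS
    have hneq : a ≠ b' := fun h => (hacc a) (h ▸ hpref)
    have hreach : reach (H.weakImprove X) b' a := hS.1.2.1 b' hbS a haS
    obtain ⟨k, c, hk, hinj, hc0, hc1, harcs⟩ :=
      exists_cycle' (H.weakImprove X) hneq hreach
    apply hnoblock
    refine ⟨k, c, ⟨hk, hinj, ?_⟩, ?_, ⟨0, ?_⟩⟩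
    · intro i
      by_cases hi : i = 0
      · subst hi
        rw [hc0, zero_add, hc1]
        exact hb'
      · exact (harcs i hi).1
    · intro i
      by_cases hi : i = 0
      · subst hi
        rw [hc0, zero_add, hc1]
        exact H.asymm a b' (X a) hpref
      · exact (harcs i hi).2
    · rw [hc0, zero_add, hc1]
      exact hpref
  · -- strong core on complement
    rintro ⟨k, c, hcyc, hmem, hno, ⟨i, b, hb, hstr⟩⟩
    apply hnoblock
    refine ⟨k, c, hcyc, ?_, ⟨i, ?_⟩⟩
    · intro j
      exact hno j (X (c j)) ⟨hmem j, rfl⟩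
    · have hbe : b = X (c i) := hb.2
      rw [← hbe]
      exact hstr
  · -- arcs leaving S are dominated
    intro a ha b hbS hE
    have hnw : (a, b) ∉ H.weakImprove X := fun h => hbS (hS.2 (a, b) h ha)
    have hpref : H.pref a (X a) b := by
      by_contra hnp
      exact hnw ⟨hE, hnp⟩
    exact ⟨(a, X a), ⟨ha, rfl⟩, rfl, hpref⟩
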